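/- Let D be a trace-class operator on H and suppose E := T₊₊(D + D*) + ½ T₀(D + D*) is trace class (where the truncations are applied entrywise to the matrix of D + D* in the basis (eₙ)). Then for every bounded skew-hermitian operator C on H one has Im Tr(C D) = Im Tr(C E). -/

import Mathlib

/- Setting: `H` is a separable complex Hilbert space with a fixed orthonormal
(Hilbert) basis `e` indexed by `ℤ`. -/

set_option synthInstance.maxHeartbeats 1000000
set_option maxHeartbeats 2000000

noncomputable section
open ContinuousLinearMap

namespace PL

variable {H : Type*} [NormedAddCommGroup H] [InnerProductSpace ℂ H] [CompleteSpace H]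

/-- `A` is a bounded skew-hermitian operator: `A* = -A`. -/
def SkewHerm (A : H →L[ℂ] H) : Prop := star A = -A

/-- `A` is Hilbert–Schmidt: `∑ₙ ‖A eₙ‖² < ∞` (computed in the orthonormal basis `e`;
this is equivalent to the basis-free notion). -/
def IsHS (e : HilbertBasis ℤ ℂ H) (A : H →L[ℂ] H) : Prop :=
  Summable (fun n : ℤ => ‖A (e n)‖ ^ 2)

/-- The Hilbert–Schmidt norm `‖A‖₂`. -/
def hsNorm (e : HilbertBasis ℤ ℂ H) (A : H →L[ℂ] H) : ℝ :=
  Real.sqrt (∑' n : ℤ, ‖A (e n)‖ ^ 2)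

/-- The absolute value `|A| = √(A* A)` of a bounded operator, via the continuous
functional calculus. -/
def absCLM (A : H →L[ℂ] H) : H →L[ℂ] H := CFC.sqrt (star A * A)

/-- `A` is trace class: `Tr |A| = ∑ₙ ⟨eₙ, |A| eₙ⟩ < ∞`. -/
def IsTC (e : HilbertBasis ℤ ℂ H) (A : H →L[ℂ] H) : Prop :=
  Summable (fun n : ℤ => (inner ℂ (e n) (absCLM A (e n)) : ℂ).re)

/-- The trace norm `‖A‖₁ = Tr |A|`. -/
def traceNorm (e : HilbertBasis ℤ ℂ H) (A : H →L[ℂ] H) : ℝ :=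
  ∑' n : ℤ, (inner ℂ (e n) (absCLM A (e n)) : ℂ).re

/-- The trace of a (trace-class) operator: `Tr A = ∑ₙ ⟨eₙ, A eₙ⟩`. -/
def traceOp (e : HilbertBasis ℤ ℂ H) (A : H →L[ℂ] H) : ℂ :=
  ∑' n : ℤ, (inner ℂ (e n) (A (e n)) : ℂ)

/-- `A` is upper triangular: `⟨eₘ, A eₙ⟩ = 0` whenever `m < n`. -/
def UpperTri (e : HilbertBasis ℤ ℂ H) (A : H →L[ℂ] H) : Prop :=
  ∀ m n : ℤ, m < n → (inner ℂ (e m) (A (e n)) : ℂ) = 0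

/-- All diagonal entries `⟨eₙ, A eₙ⟩` of `A` are real. -/
def RealDiag (e : HilbertBasis ℤ ℂ H) (A : H →L[ℂ] H) : Prop :=
  ∀ n : ℤ, (inner ℂ (e n) (A (e n)) : ℂ).im = 0

/-- Membership in `b₁⁺(H)`: trace-class, upper triangular, real diagonal. -/
def InB1 (e : HilbertBasis ℤ ℂ H) (A : H →L[ℂ] H) : Prop :=
  IsTC e A ∧ UpperTri e A ∧ RealDiag e A

/-- Membership in `u₁(H)`: trace-class and skew-hermitian. -/
def InU1 (e : HilbertBasis ℤ ℂ H) (A : H →L[ℂ] H) : Prop :=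
  IsTC e A ∧ SkewHerm A

/-- Membership in `b₂⁺(H)`: Hilbert–Schmidt, upper triangular, real diagonal. -/
def InB2 (e : HilbertBasis ℤ ℂ H) (A : H →L[ℂ] H) : Prop :=
  IsHS e A ∧ UpperTri e A ∧ RealDiag e A

/-- Membership in `u₂(H)`: Hilbert–Schmidt and skew-hermitian. -/
def InU2 (e : HilbertBasis ℤ ℂ H) (A : H →L[ℂ] H) : Prop :=
  IsHS e A ∧ SkewHerm A

set_option linter.unusedSectionVars false

lemma re_inner_self (x : H) : ((inner ℂ x x : ℂ)).re = ‖x‖ ^ 2 := by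
  simpa using inner_self_eq_norm_sq (𝕜 := ℂ) x

lemma parseval (e : HilbertBasis ℤ ℂ H) (x : H) :
    HasSum (fun n : ℤ => ‖(inner ℂ (e n) x : ℂ)‖ ^ 2) (‖x‖ ^ 2) := by
  have h2 := (e.hasSum_inner_mul_inner x x).mapL (Complex.reCLM)
  convert h2 using 2 with n
  · rw [← inner_conj_symm (e n) x, Complex.reCLM_apply, Complex.mul_conj]
    simp [Complex.normSq_eq_norm_sq, ← Complex.ofReal_pow]
    rw [← inner_conj_symm x (e n)]
    exact (Complex.norm_conj _).symm
  · rw [Complex.reCLM_apply, re_inner_self]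

lemma entry_star (e : HilbertBasis ℤ ℂ H) (A : H →L[ℂ] H) (m n : ℤ) :
    (inner ℂ (e m) ((star A) (e n)) : ℂ) = starRingEnd ℂ (inner ℂ (e n) (A (e m))) := by
  rw [star_eq_adjoint, adjoint_inner_right, ← inner_conj_symm]

lemma summable_sq_entries (e : HilbertBasis ℤ ℂ H) {A : H →L[ℂ] H} (hA : IsHS e A) :
    Summable (fun p : ℤ × ℤ => ‖(inner ℂ (e p.1) (A (e p.2)) : ℂ)‖ ^ 2) := by
  have key : Summable (fun p : ℤ × ℤ => ‖(inner ℂ (e p.2) (A (e p.1)) : ℂ)‖ ^ 2) := by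
    rw [summable_prod_of_nonneg (by intro p; positivity)]
    refine ⟨fun n => (parseval e (A (e n))).summable, ?_⟩
    exact Summable.congr hA (fun n => ((parseval e (A (e n))).tsum_eq).symm)
  exact ((Equiv.prodComm ℤ ℤ).summable_iff).mpr key

lemma isHS_star (e : HilbertBasis ℤ ℂ H) {A : H →L[ℂ] H} (hA : IsHS e A) :
    IsHS e (star A) := by
  have h2 := (summable_prod_of_nonneg
    (f := fun p : ℤ × ℤ => ‖(inner ℂ (e p.1) (A (e p.2)) : ℂ)‖ ^ 2)
    (by intro p; positivity)).mp (summable_sq_entries e hA)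
  apply Summable.congr h2.2
  intro m
  have hs : HasSum (fun n : ℤ => ‖(inner ℂ (e m) (A (e n)) : ℂ)‖ ^ 2)
      (‖(star A) (e m)‖ ^ 2) := by
    have := parseval e ((star A) (e m))
    apply HasSum.congr_fun this ?_
    intro n
    rw [entry_star, RCLike.norm_conj]
  exact hs.tsum_eq

lemma isHS_comp_left (e : HilbertBasis ℤ ℂ H) (C : H →L[ℂ] H) {A : H →L[ℂ] H}
    (hA : IsHS e A) : IsHS e (C * A) := by
  apply Summable.of_nonneg_of_le (fun n => by positivity)
    (fun n => ?_) (hA.mul_left (‖C‖ ^ 2))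
  have h1 : ‖(C * A) (e n)‖ ≤ ‖C‖ * ‖A (e n)‖ := C.le_opNorm _
  calc ‖(C * A) (e n)‖ ^ 2 ≤ (‖C‖ * ‖A (e n)‖) ^ 2 := by
        apply pow_le_pow_left₀ (norm_nonneg _) h1
    _ = ‖C‖ ^ 2 * ‖A (e n)‖ ^ 2 := by ring

lemma isHS_comp_right (e : HilbertBasis ℤ ℂ H) {A : H →L[ℂ] H} (C : H →L[ℂ] H)
    (hA : IsHS e A) : IsHS e (A * C) := by
  have h1 : IsHS e (star C * star A) := isHS_comp_left e (star C) (isHS_star e hA)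
  have h2 := isHS_star e h1
  simpa [star_mul] using h2

lemma hasSum_diag_entry (e : HilbertBasis ℤ ℂ H) (P Q : H →L[ℂ] H) (n : ℤ) :
    HasSum (fun m : ℤ => (inner ℂ (e n) (P (e m)) : ℂ) * inner ℂ (e m) (Q (e n)))
      (inner ℂ (e n) ((P * Q) (e n)) : ℂ) := by
  have h := e.hasSum_inner_mul_inner ((star P) (e n)) (Q (e n))
  have h2 : (inner ℂ ((star P) (e n)) (Q (e n)) : ℂ) = inner ℂ (e n) ((P * Q) (e n)) := by
    rw [star_eq_adjoint, adjoint_inner_left, mul_apply_eq_comp]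
  rw [h2] at h
  exact h.congr_fun (fun m => by rw [star_eq_adjoint, adjoint_inner_left])

lemma summable_double (e : HilbertBasis ℤ ℂ H) {P Q : H →L[ℂ] H}
    (hP : IsHS e P) (hQ : IsHS e Q) :
    Summable (fun p : ℤ × ℤ =>
      (inner ℂ (e p.1) (P (e p.2)) : ℂ) * inner ℂ (e p.2) (Q (e p.1))) := by
  apply Summable.of_norm
  have hPs := summable_sq_entries e hP
  have hQs : Summable (fun p : ℤ × ℤ => ‖(inner ℂ (e p.2) (Q (e p.1)) : ℂ)‖ ^ 2) :=
    ((Equiv.prodComm ℤ ℤ).summable_iff).mpr (summable_sq_entries e hQ)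
  apply Summable.of_nonneg_of_le (fun p => norm_nonneg _) (fun p => ?_)
    ((hPs.add hQs).mul_left (1/2 : ℝ))
  rw [norm_mul]
  nlinarith [sq_nonneg (‖(inner ℂ (e p.1) (P (e p.2)) : ℂ)‖ - ‖(inner ℂ (e p.2) (Q (e p.1)) : ℂ)‖),
    norm_nonneg (inner ℂ (e p.1) (P (e p.2)) : ℂ), norm_nonneg (inner ℂ (e p.2) (Q (e p.1)) : ℂ)]

lemma hasSum_diag (e : HilbertBasis ℤ ℂ H) {P Q : H →L[ℂ] H}
    (hP : IsHS e P) (hQ : IsHS e Q) :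
    HasSum (fun n : ℤ => (inner ℂ (e n) ((P * Q) (e n)) : ℂ))
      (∑' p : ℤ × ℤ, (inner ℂ (e p.1) (P (e p.2)) : ℂ) * inner ℂ (e p.2) (Q (e p.1))) :=
  ((summable_double e hP hQ).hasSum).prod_fiberwise (fun n => hasSum_diag_entry e P Q n)

lemma summable_diag (e : HilbertBasis ℤ ℂ H) {P Q : H →L[ℂ] H}
    (hP : IsHS e P) (hQ : IsHS e Q) :
    Summable (fun n : ℤ => (inner ℂ (e n) ((P * Q) (e n)) : ℂ)) :=
  (hasSum_diag e hP hQ).summable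

lemma trace_comm (e : HilbertBasis ℤ ℂ H) {P Q : H →L[ℂ] H}
    (hP : IsHS e P) (hQ : IsHS e Q) :
    traceOp e (P * Q) = traceOp e (Q * P) := by
  rw [traceOp, traceOp, (hasSum_diag e hP hQ).tsum_eq, (hasSum_diag e hQ hP).tsum_eq]
  rw [← ((Equiv.prodComm ℤ ℤ).tsum_eq
    (fun p : ℤ × ℤ => (inner ℂ (e p.1) (Q (e p.2)) : ℂ) * inner ℂ (e p.2) (P (e p.1))))]
  exact tsum_congr (fun p => mul_comm _ _)

lemma exists_hs_factor (e : HilbertBasis ℤ ℂ H) (D : H →L[ℂ] H) (hD : IsTC e D) :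
    ∃ A B : H →L[ℂ] H, IsHS e A ∧ IsHS e B ∧ A * B = D := by
  set S : H →L[ℂ] H := absCLM D with hSdef
  have hDDnn : (0 : H →L[ℂ] H) ≤ star D * D := star_mul_self_nonneg D
  have hSnn : (0 : H →L[ℂ] H) ≤ S := CFC.sqrt_nonneg _
  have hSsq : S * S = star D * D := by
    have h := CFC.sq_sqrt (star D * D) hDDnn
    rw [sq] at h; exact h
  have hSsa : IsSelfAdjoint S := IsSelfAdjoint.of_nonneg hSnn
  set R : H →L[ℂ] H := CFC.sqrt S with hRdef
  have hRnn : (0 : H →L[ℂ] H) ≤ R := CFC.sqrt_nonneg _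
  have hRsq : R * R = S := by
    have h := CFC.sq_sqrt S hSnn
    rw [sq] at h; exact h
  have hRsa : IsSelfAdjoint R := IsSelfAdjoint.of_nonneg hRnn
  have hRadj : adjoint R = R := by rw [← star_eq_adjoint]; exact hRsa
  have hSadj : adjoint S = S := by rw [← star_eq_adjoint]; exact hSsa
  have innR : ∀ x y : H, (inner ℂ (R x) y : ℂ) = inner ℂ x (R y) := by
    intro x y; rw [← hRadj, adjoint_inner_left, hRadj]
  have innS : ∀ x y : H, (inner ℂ (S x) y : ℂ) = inner ℂ x (S y) := by
    intro x y; rw [← hSadj, adjoint_inner_left, hSadj]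
  -- ‖D z‖ = ‖S z‖
  have hnormD : ∀ z : H, ‖D z‖ = ‖S z‖ := by
    intro z
    have hsq : ‖D z‖ ^ 2 = ‖S z‖ ^ 2 := by
      rw [← re_inner_self (D z), ← re_inner_self (S z)]
      congr 1
      have h1 : (inner ℂ (D z) (D z) : ℂ) = inner ℂ z ((star D * D) z) := by
        rw [star_eq_adjoint, mul_apply_eq_comp, ← adjoint_inner_right]
      rw [h1, ← hSsq, mul_apply_eq_comp, ← innS]
    rw [← Real.sqrt_sq (norm_nonneg (D z)), hsq, Real.sqrt_sq (norm_nonneg (S z))]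
  -- ‖R z‖² = re ⟪z, S z⟫
  have hnormR : ∀ z : H, ‖R z‖ ^ 2 = (inner ℂ z (S z) : ℂ).re := by
    intro z
    rw [← re_inner_self (R z)]
    congr 1
    rw [innR, ← mul_apply_eq_comp, hRsq]
  have hRHS : IsHS e R := by
    apply Summable.congr hD
    intro n
    exact (hnormR (e n)).symm
  -- key: S z = S w → D z = D w
  have hkey : ∀ z w : H, S z = S w → D z = D w := by
    intro z w h
    have h2 : ‖D z - D w‖ = 0 := by
      rw [← map_sub, hnormD, map_sub, h, sub_self, norm_zero]
    rw [← sub_eq_zero]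
    exact norm_eq_zero.mp h2
  -- the closed subspace
  set Kc : Submodule ℂ H := (LinearMap.ker (S : H →ₗ[ℂ] H))ᗮ with hKcdef
  have hRker : ∀ u : H, S u = 0 → R u = 0 := by
    intro u hu
    have : ‖R u‖ ^ 2 = 0 := by rw [hnormR, hu, inner_zero_right]; simp
    have := pow_eq_zero_iff (n := 2) (by norm_num) |>.mp this
    exact norm_eq_zero.mp this
  have hRmem : ∀ x : H, R x ∈ Kc := by
    intro x
    rw [Submodule.mem_orthogonal]
    intro u hu
    have hu' : S u = 0 := hu
    rw [← innR, hRker u hu', inner_zero_left]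
  have hSmemKc : ∀ z : H, S z ∈ Kc := by
    intro z; rw [← hRsq, mul_apply_eq_comp]; exact hRmem (R z)
  set K' : Submodule ℂ Kc := (LinearMap.range (S : H →ₗ[ℂ] H)).comap Kc.subtype with hK'def
  -- density of K' in Kc
  have hdense : Dense (K' : Set Kc) := by
    intro y
    rw [closure_subtype]
    have himg : (Subtype.val '' (K' : Set Kc)) = ((LinearMap.range (S : H →ₗ[ℂ] H) : Submodule ℂ H) : Set H) := by
      ext x
      constructor
      · rintro ⟨w, hmem, rfl⟩
        exact hmem
      · intro hx
        rcases hx with ⟨z, hz⟩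
        have hxKc : x ∈ Kc := by rw [← hz]; exact hSmemKc z
        refine ⟨⟨x, hxKc⟩, ?_, rfl⟩
        show Kc.subtype ⟨x, hxKc⟩ ∈ LinearMap.range (S : H →ₗ[ℂ] H)
        exact ⟨z, hz⟩
    rw [himg]
    have horth : (LinearMap.range (S : H →ₗ[ℂ] H))ᗮ = LinearMap.ker (S : H →ₗ[ℂ] H) := by
      ext v
      rw [Submodule.mem_orthogonal]
      constructor
      · intro h
        have h2 : (inner ℂ (S v) (S v) : ℂ) = 0 := by
          rw [← innS (S v) v]
          exact h (S (S v)) ⟨S v, rfl⟩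
        exact inner_self_eq_zero.mp h2
      · intro hv u hu
        obtain ⟨z, hz⟩ := hu
        have hv' : S v = 0 := hv
        rw [← hz]
        show (inner ℂ (S z) v : ℂ) = 0
        rw [innS z v, hv', inner_zero_right]
    have hclos : (LinearMap.range (S : H →ₗ[ℂ] H)).topologicalClosure = Kc := by
      rw [← Submodule.orthogonal_orthogonal_eq_closure, horth]
    have hy : (y : H) ∈ (LinearMap.range (S : H →ₗ[ℂ] H)).topologicalClosure := by
      rw [hclos]; exact y.2
    rw [← Submodule.topologicalClosure_coe]
    exact hy
  -- choose preimages
  have hpre0 : ∀ y : K', ∃ z : H, S z = ((y : Kc) : H) := fun y => y.2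
  choose pre hpre using hpre0
  -- U₀ linear
  have hDadd : ∀ y z : K', D (pre (y + z)) = D (pre y) + D (pre z) := by
    intro y z
    rw [← map_add]
    apply hkey
    rw [map_add, hpre, hpre, hpre]
    norm_cast
  have hDsmul : ∀ (c : ℂ) (y : K'), D (pre (c • y)) = c • D (pre y) := by
    intro c y
    rw [← map_smul]
    apply hkey
    rw [map_smul, hpre, hpre]
    norm_cast
  set U₀ : K' →ₗ[ℂ] H :=
    { toFun := fun y => D (pre y)
      map_add' := hDadd
      map_smul' := hDsmul } with hU₀def
  have hU₀bd : ∀ y : K', ‖U₀ y‖ ≤ 1 * ‖y‖ := by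
    intro y
    have h1 : ‖D (pre y)‖ = ‖S (pre y)‖ := hnormD _
    rw [one_mul]
    show ‖D (pre y)‖ ≤ ‖y‖
    rw [h1, hpre]
    norm_num [Submodule.coe_norm]
  set U₁ : K' →L[ℂ] H := U₀.mkContinuous 1 hU₀bd with hU₁def
  set U₂ : Kc →L[ℂ] H := U₁.extend (Submodule.subtypeL K')
    with hU₂def
  set R' : H →L[ℂ] Kc := R.codRestrict Kc hRmem with hR'def
  refine ⟨U₂.comp R', R, ?_, hRHS, ?_⟩
  · -- HS of U₂ ∘ R'
    apply Summable.of_nonneg_of_le (fun n => by positivity) (fun n => ?_)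
      (hRHS.mul_left (‖U₂‖ ^ 2))
    have h1 : ‖(U₂.comp R') (e n)‖ ≤ ‖U₂‖ * ‖R' (e n)‖ := U₂.le_opNorm _
    have h2 : ‖R' (e n)‖ = ‖R (e n)‖ := rfl
    calc ‖(U₂.comp R') (e n)‖ ^ 2 ≤ (‖U₂‖ * ‖R' (e n)‖) ^ 2 :=
          pow_le_pow_left₀ (norm_nonneg _) h1 2
      _ = ‖U₂‖ ^ 2 * ‖R (e n)‖ ^ 2 := by rw [h2]; ring
  · -- A * B = D
    ext z
    show U₂ (R' (R z)) = D z
    have hmemK' : (⟨S z, hSmemKc z⟩ : Kc) ∈ K' := by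
      simp only [hK'def, Submodule.mem_comap]
      exact ⟨z, rfl⟩
    have hval : R' (R z) = (Submodule.subtypeL K') (⟨⟨S z, hSmemKc z⟩, hmemK'⟩ : K') := by
      apply Subtype.ext
      show R (R z) = S z
      rw [← mul_apply_eq_comp, hRsq]
    rw [hval, ContinuousLinearMap.extend_eq _ hdense.denseRange_val
      isUniformEmbedding_subtype_val.isUniformInducing]
    show D (pre _) = D z
    apply hkey
    rw [hpre]

lemma eq_of_entries (e : HilbertBasis ℤ ℂ H) {T₁ T₂ : H →L[ℂ] H}
    (h : ∀ m n : ℤ, (inner ℂ (e m) (T₁ (e n)) : ℂ) = inner ℂ (e m) (T₂ (e n))) :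
    T₁ = T₂ := by
  have hbasis : ∀ n : ℤ, T₁ (e n) = T₂ (e n) := by
    intro n
    have h0 : HasSum (fun m : ℤ => ‖(inner ℂ (e m) (T₁ (e n) - T₂ (e n)) : ℂ)‖ ^ 2) 0 := by
      have : (fun m : ℤ => ‖(inner ℂ (e m) (T₁ (e n) - T₂ (e n)) : ℂ)‖ ^ 2) = fun _ => 0 := by
        funext m
        rw [inner_sub_right, h m n, sub_self]
        simp
      rw [this]
      exact hasSum_zero
    have h1 := (parseval e (T₁ (e n) - T₂ (e n))).unique h0
    have h2 : ‖T₁ (e n) - T₂ (e n)‖ = 0 := by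
      have := pow_eq_zero_iff (n := 2) (by norm_num) |>.mp h1
      exact this
    rw [← sub_eq_zero]
    exact norm_eq_zero.mp h2
  have hd : Dense ((Submodule.span ℂ (Set.range (e : ℤ → H))) : Set H) := by
    rw [dense_iff_closure_eq, ← Submodule.topologicalClosure_coe, e.dense_span]
    rfl
  apply ContinuousLinearMap.ext_on hd
  rintro x ⟨n, rfl⟩
  exact hbasis n

lemma traceOp_star (e : HilbertBasis ℤ ℂ H) (T : H →L[ℂ] H) :
    traceOp e (star T) = starRingEnd ℂ (traceOp e T) := by
  calc traceOp e (star T) = ∑' n : ℤ, star (inner ℂ (e n) (T (e n)) : ℂ) :=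
        tsum_congr (fun n => by rw [entry_star e T n n]; rfl)
    _ = star (∑' n : ℤ, (inner ℂ (e n) (T (e n)) : ℂ)) := tsum_star.symm
    _ = starRingEnd ℂ (traceOp e T) := rfl

lemma traceOp_neg (e : HilbertBasis ℤ ℂ H) (T : H →L[ℂ] H) :
    traceOp e (-T) = -traceOp e T := by
  rw [traceOp, traceOp, ← tsum_neg]
  exact tsum_congr (fun n => by rw [neg_apply, inner_neg_right])

theorem statement_2_aux (e : HilbertBasis ℤ ℂ H) (D E : H →L[ℂ] H)
    (hD : IsTC e D) (hE : IsTC e E)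
    (hstrict : ∀ m n : ℤ, n < m →
      (inner ℂ (e m) (E (e n)) : ℂ) = inner ℂ (e m) ((D + star D) (e n)))
    (hdiag : ∀ n : ℤ,
      (inner ℂ (e n) (E (e n)) : ℂ) = (1 / 2 : ℂ) * inner ℂ (e n) ((D + star D) (e n)))
    (hupper : ∀ m n : ℤ, m < n → (inner ℂ (e m) (E (e n)) : ℂ) = 0) :
    ∀ C : H →L[ℂ] H, SkewHerm C →
      (traceOp e (C * D)).im = (traceOp e (C * E)).im := by
  -- the symmetrized operators agree
  have hGsa : star (D + star D) = D + star D := by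
    rw [star_add, star_star, add_comm]
  have hG : D + star D = E + star E := by
    apply eq_of_entries e
    intro m n
    have hEstar : (inner ℂ (e m) ((star E) (e n)) : ℂ) = starRingEnd ℂ (inner ℂ (e n) (E (e m))) :=
      entry_star e E m n
    have hGconj : ∀ a b : ℤ, starRingEnd ℂ (inner ℂ (e a) ((D + star D) (e b)) : ℂ)
        = inner ℂ (e b) ((D + star D) (e a)) := by
      intro a b
      rw [← entry_star e (D + star D) b a, hGsa]
    conv_rhs => rw [add_apply, inner_add_right, hEstar]
    rcases lt_trichotomy m n with hlt | heq | hgt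
    · rw [hupper m n hlt, hstrict n m hlt, hGconj]
      simp
    · subst heq
      rw [hdiag m, map_mul, hGconj]
      have h12 : (starRingEnd ℂ) (1 / 2 : ℂ) = (1 / 2 : ℂ) := by
        simp [Complex.ext_iff]
      rw [h12]
      ring
    · rw [hstrict m n hgt, hupper n m hgt]
      simp
  intro C hC
  obtain ⟨A, B, hA, hB, hAB⟩ := exists_hs_factor e D hD
  obtain ⟨A', B', hA', hB', hAB'⟩ := exists_hs_factor e E hE
  -- generic computation for a factored trace-class operator
  have main : ∀ X P Q : H →L[ℂ] H, IsHS e P → IsHS e Q → P * Q = X →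
      traceOp e (C * X) - starRingEnd ℂ (traceOp e (C * X))
        = ∑' n : ℤ, (inner ℂ (e n) ((C * (X + star X)) (e n)) : ℂ) := by
    intro X P Q hP hQ hPQ
    have s1 : Summable (fun n : ℤ => (inner ℂ (e n) ((C * X) (e n)) : ℂ)) := by
      have : C * X = (C * P) * Q := by rw [← hPQ, mul_assoc]
      rw [this]
      exact summable_diag e (isHS_comp_left e C hP) hQ
    have s2 : Summable (fun n : ℤ => (inner ℂ (e n) ((C * star X) (e n)) : ℂ)) := by
      have : C * star X = (C * star Q) * star P := by
        rw [← hPQ, star_mul, mul_assoc]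
      rw [this]
      exact summable_diag e (isHS_comp_left e C (isHS_star e hQ)) (isHS_star e hP)
    have hconj : starRingEnd ℂ (traceOp e (C * X)) = - traceOp e (C * star X) := by
      rw [← traceOp_star e (C * X), star_mul, hC]
      have h1 : star X * -C = -(star X * C) := by rw [mul_neg]
      rw [h1, traceOp_neg]
      congr 1
      -- Tr(star X * C) = Tr(C * star X)
      have e1 : star X * C = star Q * (star P * C) := by rw [← hPQ, star_mul, mul_assoc]
      have e2 : C * star X = C * star Q * star P := by rw [← hPQ, star_mul, ← mul_assoc]
      rw [e1, e2]
      rw [trace_comm e (isHS_star e hQ) (isHS_comp_right e C (isHS_star e hP))]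
      rw [mul_assoc]
      rw [trace_comm e (isHS_star e hP) (isHS_comp_left e C (isHS_star e hQ))]
    rw [hconj, sub_neg_eq_add, traceOp, traceOp, ← Summable.tsum_add s1 s2]
    apply tsum_congr
    intro n
    rw [mul_apply_eq_comp, mul_apply_eq_comp, mul_apply_eq_comp, add_apply, map_add, inner_add_right]
  have hmD := main D A B hA hB hAB
  have hmE := main E A' B' hA' hB' hAB'
  rw [hG] at hmD
  have hkey : traceOp e (C * D) - starRingEnd ℂ (traceOp e (C * D))
      = traceOp e (C * E) - starRingEnd ℂ (traceOp e (C * E)) := by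
    rw [hmD, hmE]
  set z := traceOp e (C * D)
  set w := traceOp e (C * E)
  rw [Complex.sub_conj, Complex.sub_conj] at hkey
  have hI : (Complex.I : ℂ) ≠ 0 := Complex.I_ne_zero
  have h2 : ((2 * z.im : ℝ) : ℂ) = ((2 * w.im : ℝ) : ℂ) := mul_right_cancel₀ hI hkey
  have h3 : 2 * z.im = 2 * w.im := by exact_mod_cast h2
  linarith


/-- if `D` is trace class and `E = T₊₊(D + D*) + ½ T₀(D + D*)` (described
entrywise in the basis `e`: strictly-upper entries `m > n` agree with those of `D + D*`,
diagonal entries are half those of `D + D*`, entries with `m < n` vanish) is trace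
class, then `Im Tr(C D) = Im Tr(C E)` for every bounded skew-hermitian `C`. -/
theorem statement_2 {H : Type*} [NormedAddCommGroup H] [InnerProductSpace ℂ H]
    [CompleteSpace H] (e : HilbertBasis ℤ ℂ H) (D E : H →L[ℂ] H)
    (hD : IsTC e D) (hE : IsTC e E)
    (hstrict : ∀ m n : ℤ, n < m →
      (inner ℂ (e m) (E (e n)) : ℂ) = inner ℂ (e m) ((D + star D) (e n)))
    (hdiag : ∀ n : ℤ,
      (inner ℂ (e n) (E (e n)) : ℂ) = (1 / 2 : ℂ) * inner ℂ (e n) ((D + star D) (e n)))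
    (hupper : ∀ m n : ℤ, m < n → (inner ℂ (e m) (E (e n)) : ℂ) = 0) :
    ∀ C : H →L[ℂ] H, SkewHerm C →
      (traceOp e (C * D)).im = (traceOp e (C * E)).im :=
  statement_2_aux e D E hD hE hstrict hdiag hupper

end PL
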